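/- The Okada monoid O_N is aperiodic: there exists an integer K such that m^K = m^{K+1} for every element m of O_N. -/

import Mathlib

/-- The defining relations of the Okada monoid on `n` generators `e_1, …, e_n`
(indexed by `Fin n`, with `i : Fin n` standing for `e_{i+1}`):
`e_i² = e_i`, `e_i e_j = e_j e_i` for `|i - j| ≥ 2`, and `e_{i+1} e_i e_{i+1} = e_{i+1}`. -/
inductive OkadaRel (n : ℕ) : FreeMonoid (Fin n) → FreeMonoid (Fin n) → Prop
  | idem (i : Fin n) : OkadaRel n (.of i * .of i) (.of i)
  | comm (i j : Fin n) (h : (i : ℕ) + 2 ≤ (j : ℕ)) :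
      OkadaRel n (.of i * .of j) (.of j * .of i)
  | braid (i j : Fin n) (h : (j : ℕ) = (i : ℕ) + 1) :
      OkadaRel n (.of j * .of i * .of j) (.of j)

/-- The Okada monoid on `n` generators: the free monoid on `n` generators modulo the
congruence generated by the Okada relations.  The Okada monoid `O_N` of the paper is
`OkadaMonoid (N - 1)`. -/
def OkadaMonoid (n : ℕ) := (conGen (OkadaRel n)).Quotient

instance (n : ℕ) : Monoid (OkadaMonoid n) :=
  inferInstanceAs (Monoid (conGen (OkadaRel n)).Quotient)

/-- The generator `e_{i+1}` of the Okada monoid. -/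
def okadaGen (n : ℕ) (i : Fin n) : OkadaMonoid n :=
  (conGen (OkadaRel n)).mk' (FreeMonoid.of i)

/-- The generator `e_a` (`1`-indexed) of the Okada monoid, or `1` if out of range. -/
def okadaGenN (n : ℕ) (a : ℕ) : OkadaMonoid n :=
  if h : a - 1 < n then okadaGen n ⟨a - 1, h⟩ else 1

namespace OkadaAux

variable {n : ℕ}

def P (n : ℕ) (l : List (Fin n)) : OkadaMonoid n := (l.map (okadaGen n)).prod

@[simp] lemma P_nil : P n [] = 1 := rfl

@[simp] lemma P_cons (a : Fin n) (l : List (Fin n)) :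
    P n (a :: l) = okadaGen n a * P n l := by
  simp [P]

@[simp] lemma P_append (l₁ l₂ : List (Fin n)) :
    P n (l₁ ++ l₂) = P n l₁ * P n l₂ := by
  simp [P]

lemma okadaGen_coe (i : Fin n) :
    okadaGen n i = ((FreeMonoid.of i : FreeMonoid (Fin n)) : (conGen (OkadaRel n)).Quotient) :=
  rfl

lemma gen_idem (i : Fin n) : okadaGen n i * okadaGen n i = okadaGen n i := by
  simp only [okadaGen_coe, ← Con.coe_mul]
  exact (Con.eq _).mpr (ConGen.Rel.of _ _ (OkadaRel.idem i))

lemma gen_comm {i j : Fin n} (h : (i : ℕ) + 2 ≤ (j : ℕ)) :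
    okadaGen n i * okadaGen n j = okadaGen n j * okadaGen n i := by
  simp only [okadaGen_coe, ← Con.coe_mul]
  exact (Con.eq _).mpr (ConGen.Rel.of _ _ (OkadaRel.comm i j h))

lemma gen_braid {i j : Fin n} (h : (j : ℕ) = (i : ℕ) + 1) :
    okadaGen n j * okadaGen n i * okadaGen n j = okadaGen n j := by
  simp only [okadaGen_coe, ← Con.coe_mul]
  exact (Con.eq _).mpr (ConGen.Rel.of _ _ (OkadaRel.braid i j h))

lemma P_comm_gen (t : Fin n) (l : List (Fin n)) (h : ∀ i ∈ l, (i : ℕ) + 2 ≤ (t : ℕ)) :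
    P n l * okadaGen n t = okadaGen n t * P n l := by
  induction l with
  | nil => simp
  | cons a l ih =>
    have ha := h a List.mem_cons_self
    have hl := ih fun i hi => h i (List.mem_cons_of_mem a hi)
    calc okadaGen n a * P n l * okadaGen n t
        = okadaGen n a * (P n l * okadaGen n t) := by rw [mul_assoc]
      _ = okadaGen n a * okadaGen n t * P n l := by rw [hl, mul_assoc]
      _ = okadaGen n t * okadaGen n a * P n l := by rw [gen_comm ha]
      _ = okadaGen n t * (okadaGen n a * P n l) := by rw [mul_assoc]

lemma split_first {α : Type*} (p : α → Prop) [DecidablePred p] {l : List α}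
    (h : ∃ a ∈ l, p a) :
    ∃ s a u, l = s ++ a :: u ∧ p a ∧ ∀ x ∈ s, ¬ p x := by
  induction l with
  | nil => simp at h
  | cons b l ih =>
    by_cases hb : p b
    · exact ⟨[], b, l, rfl, hb, by simp⟩
    · obtain ⟨a, ha, hpa⟩ := h
      rcases List.mem_cons.mp ha with rfl | ha
      · exact absurd hpa hb
      · obtain ⟨s, a, u, rfl, hpa', hs⟩ := ih ⟨a, ha, hpa⟩
        refine ⟨b :: s, a, u, rfl, hpa', ?_⟩
        intro x hx
        rcases List.mem_cons.mp hx with rfl | hx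
        · exact hb
        · exact hs x hx

lemma P_surj (m : OkadaMonoid n) : ∃ l : List (Fin n), P n l = m := by
  refine Con.induction_on m fun w => ?_
  induction w using FreeMonoid.inductionOn' with
  | one => exact ⟨[], Con.coe_one.symm⟩
  | of_mul b w ih =>
    obtain ⟨l, hl⟩ := ih
    refine ⟨b :: l, ?_⟩
    rw [P_cons, hl, okadaGen_coe]
    exact (Con.coe_mul _ _).symm

end OkadaAux

namespace OkadaAux2
open OkadaAux

variable {n : ℕ}

section PowLemmas

variable {M : Type*} [Monoid M]

lemma pow_decomp (A e B : M) : ∀ m : ℕ, (A * e * B) ^ (m + 1) = A * ((e * (B * A)) ^ m * (e * B)) := by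
  intro m
  induction m with
  | zero => simp [mul_assoc]
  | succ m ih =>
    rw [pow_succ', ih, pow_succ']
    simp [mul_assoc]

lemma pow_sandwich' (e x y : M) (h : e * x * e = e * y) :
    ∀ m : ℕ, (e * x) ^ m * e = e * y ^ m := by
  intro m
  induction m with
  | zero => simp
  | succ m ih =>
    calc (e * x) ^ (m + 1) * e = (e * x) * ((e * x) ^ m * e) := by
          rw [pow_succ']; simp [mul_assoc]
      _ = (e * x) * (e * y ^ m) := by rw [ih]
      _ = (e * x * e) * y ^ m := by simp [mul_assoc]
      _ = (e * y) * y ^ m := by rw [h]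
      _ = e * y ^ (m + 1) := by rw [pow_succ']; simp [mul_assoc]

lemma pow_stab {y : M} {g : ℕ} (h : y ^ g = y ^ (g + 1)) :
    ∀ m : ℕ, g ≤ m → y ^ m = y ^ (m + 1) := by
  intro m hm
  obtain ⟨d, rfl⟩ := Nat.exists_eq_add_of_le hm
  induction d with
  | zero => simpa using h
  | succ d ih =>
    have ih' := ih (Nat.le_add_right _ _)
    have key : y ^ (g + d + 1) = y ^ (g + d + 1 + 1) := by
      rw [pow_succ, pow_succ, ih']
    rw [Nat.add_succ]
    exact key

end PowLemmas

/-- The key "sandwich" lemma: `e_t · x · e_t = e_t · y` for some word `y` all of whose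
letters commute with `e_t`. -/
lemma sandwich : ∀ v : ℕ, ∀ t : Fin n, (t : ℕ) = v →
    ∀ l : List (Fin n), (∀ i ∈ l, (i : ℕ) < (t : ℕ)) →
    ∃ y : List (Fin n), y.length ≤ l.length ∧ (∀ i ∈ y, (i : ℕ) + 2 ≤ (t : ℕ)) ∧
      okadaGen n t * P n l * okadaGen n t = okadaGen n t * P n y := by
  intro v
  induction v using Nat.strong_induction_on with
  | _ v IHv =>
  intro t htv
  suffices H : ∀ c : ℕ, ∀ l : List (Fin n), (∀ i ∈ l, (i : ℕ) < (t : ℕ)) →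
      l.countP (fun i : Fin n => decide ((i : ℕ) + 1 = (t : ℕ))) ≤ c →
      ∃ y : List (Fin n), y.length ≤ l.length ∧ (∀ i ∈ y, (i : ℕ) + 2 ≤ (t : ℕ)) ∧
        okadaGen n t * P n l * okadaGen n t = okadaGen n t * P n y by
    intro l hl
    exact H _ l hl le_rfl
  intro c
  induction c with
  | zero =>
    intro l hl hc
    have h0 := List.countP_eq_zero.mp (Nat.le_zero.mp hc)
    have hcomm : ∀ i ∈ l, (i : ℕ) + 2 ≤ (t : ℕ) := by
      intro i hi
      have h1 := h0 i hi
      have h2 := hl i hi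
      simp only [decide_eq_true_eq] at h1
      omega
    refine ⟨l, le_rfl, hcomm, ?_⟩
    calc okadaGen n t * P n l * okadaGen n t
        = okadaGen n t * (P n l * okadaGen n t) := mul_assoc _ _ _
      _ = okadaGen n t * (okadaGen n t * P n l) := by rw [P_comm_gen t l hcomm]
      _ = okadaGen n t * okadaGen n t * P n l := (mul_assoc _ _ _).symm
      _ = okadaGen n t * P n l := by rw [gen_idem]
  | succ c IHc =>
    intro l hl hc
    by_cases hx : ∃ a ∈ l, (a : ℕ) + 1 = (t : ℕ)
    case neg =>
      have h0 : l.countP (fun i : Fin n => decide ((i : ℕ) + 1 = (t : ℕ))) = 0 := by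
        refine List.countP_eq_zero.mpr ?_
        intro a ha
        simp only [decide_eq_true_eq]
        exact fun h => hx ⟨a, ha, h⟩
      exact IHc l hl (h0 ▸ Nat.zero_le c)
    case pos =>
    obtain ⟨s, a, u, rfl, hpa, hs⟩ := split_first (fun i : Fin n => (i : ℕ) + 1 = (t : ℕ)) hx
    have hs2 : ∀ x ∈ s, (x : ℕ) + 2 ≤ (t : ℕ) := by
      intro x hx'
      have h1 := hl x (by simp [hx'])
      have h2 := hs x hx'
      omega
    by_cases hu : ∃ a₂ ∈ u, (a₂ : ℕ) + 1 = (t : ℕ)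
    · -- two occurrences of the letter `t - 1`: collapse the inner pair using level `t - 1`
      obtain ⟨b, a₂, d, rfl, hpa2, hb⟩ := split_first (fun i : Fin n => (i : ℕ) + 1 = (t : ℕ)) hu
      have haa : a₂ = a := Fin.ext (by omega)
      subst haa
      have hblt : ∀ i ∈ b, (i : ℕ) < (a₂ : ℕ) := by
        intro i hi
        have h1 := hl i (by simp [hi])
        have h2 := hb i hi
        omega
      obtain ⟨y0, hy0len, hy0le, hy0eq⟩ := IHv (a₂ : ℕ) (by omega) a₂ rfl b hblt
      have hPeq : P n (s ++ a₂ :: (b ++ a₂ :: d)) = P n (s ++ a₂ :: (y0 ++ d)) := by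
        simp only [P_append, P_cons, mul_assoc]
        congr 1
        rw [← mul_assoc, ← mul_assoc, hy0eq, mul_assoc]
      have hl' : ∀ i ∈ s ++ a₂ :: (y0 ++ d), (i : ℕ) < (t : ℕ) := by
        intro i hi
        simp only [List.mem_append, List.mem_cons] at hi
        rcases hi with h | h | h | h
        · exact hl i (by simp [h])
        · subst h; omega
        · have := hy0le i h; omega
        · exact hl i (by simp [h])
      have hcount : (s ++ a₂ :: (y0 ++ d)).countP (fun i : Fin n => decide ((i : ℕ) + 1 = (t : ℕ))) ≤ c := by
        have hcs : s.countP (fun i : Fin n => decide ((i : ℕ) + 1 = (t : ℕ))) = 0 :=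
          List.countP_eq_zero.mpr (fun x hx' => by
            simp only [decide_eq_true_eq]; exact hs x hx')
        have hcb : b.countP (fun i : Fin n => decide ((i : ℕ) + 1 = (t : ℕ))) = 0 :=
          List.countP_eq_zero.mpr (fun x hx' => by
            simp only [decide_eq_true_eq]; exact hb x hx')
        have hcy0 : y0.countP (fun i : Fin n => decide ((i : ℕ) + 1 = (t : ℕ))) = 0 :=
          List.countP_eq_zero.mpr (fun x hx' => by
            simp only [decide_eq_true_eq]
            have := hy0le x hx'
            omega)
        have hpa' : (fun i : Fin n => decide ((i : ℕ) + 1 = (t : ℕ))) a₂ = true := by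
          simp only [decide_eq_true_eq]; omega
        simp [List.countP_append, List.countP_cons, hpa', hcs, hcb, hcy0] at hc ⊢
        omega
      obtain ⟨y, hy1, hy2, hy3⟩ := IHc (s ++ a₂ :: (y0 ++ d)) hl' hcount
      refine ⟨y, ?_, hy2, ?_⟩
      · have h1 : (s ++ a₂ :: (y0 ++ d)).length ≤ (s ++ a₂ :: (b ++ a₂ :: d)).length := by
          simp only [List.length_append, List.length_cons]
          omega
        omega
      · rw [hPeq]
        exact hy3
    · -- single occurrence: braid it away
      have hu2 : ∀ x ∈ u, (x : ℕ) + 2 ≤ (t : ℕ) := by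
        intro x hx'
        have h1 := hl x (by simp [hx'])
        have h2 : ¬ ((x : ℕ) + 1 = (t : ℕ)) := fun h => hu ⟨x, hx', h⟩
        omega
      have h1 : P n s * okadaGen n t = okadaGen n t * P n s := P_comm_gen _ _ hs2
      have h2 : P n u * okadaGen n t = okadaGen n t * P n u := P_comm_gen _ _ hu2
      have h3 : okadaGen n t * okadaGen n a * okadaGen n t = okadaGen n t := by
        have : (t : ℕ) = (a : ℕ) + 1 := hpa.symm
        exact gen_braid this
      refine ⟨s ++ u, by simp only [List.length_append, List.length_cons]; omega, ?_, ?_⟩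
      · intro i hi
        rcases List.mem_append.mp hi with h | h
        exacts [hs2 i h, hu2 i h]
      · calc okadaGen n t * P n (s ++ a :: u) * okadaGen n t
            = (okadaGen n t * P n s) * (okadaGen n a * (P n u * okadaGen n t)) := by
              simp [mul_assoc]
          _ = (P n s * okadaGen n t) * (okadaGen n a * (okadaGen n t * P n u)) := by
              rw [h1, h2]
          _ = P n s * (okadaGen n t * okadaGen n a * okadaGen n t) * P n u := by
              simp [mul_assoc]
          _ = P n s * okadaGen n t * P n u := by rw [h3]
          _ = okadaGen n t * P n (s ++ u) := by rw [h1]; simp [mul_assoc]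

/-- Any word containing the maximal letter `t` can be written `A · e_t · B` with `A`, `B`
only involving letters smaller than `t`. -/
lemma decomp : ∀ L : ℕ, ∀ l : List (Fin n), l.length ≤ L → ∀ t : Fin n,
    (∀ i ∈ l, (i : ℕ) ≤ (t : ℕ)) → t ∈ l →
    ∃ A B : List (Fin n), (∀ i ∈ A, (i : ℕ) < (t : ℕ)) ∧ (∀ i ∈ B, (i : ℕ) < (t : ℕ)) ∧
      P n l = P n A * okadaGen n t * P n B := by
  intro L
  induction L with
  | zero =>
    intro l hL t _ htl
    cases l with
    | nil => simp at htl
    | cons a u => simp at hL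
  | succ L IH =>
    intro l hL t hle htl
    obtain ⟨s, a, u, rfl, hpa, hs⟩ := split_first (fun i : Fin n => i = t) ⟨t, htl, rfl⟩
    subst hpa
    have hslt : ∀ i ∈ s, (i : ℕ) < (a : ℕ) := by
      intro i hi
      have h1 := hle i (by simp [hi])
      have h2 := hs i hi
      have : (i : ℕ) ≠ (a : ℕ) := fun h => h2 (Fin.ext h)
      omega
    by_cases hu : a ∈ u
    · obtain ⟨b, a₂, d, rfl, hpa2, hb⟩ := split_first (fun i : Fin n => i = a) ⟨a, hu, rfl⟩
      subst hpa2
      have hblt : ∀ i ∈ b, (i : ℕ) < (a₂ : ℕ) := by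
        intro i hi
        have h1 := hle i (by simp [hi])
        have h2 := hb i hi
        have : (i : ℕ) ≠ (a₂ : ℕ) := fun h => h2 (Fin.ext h)
        omega
      obtain ⟨y0, hy0len, hy0le, hy0eq⟩ := sandwich (a₂ : ℕ) a₂ rfl b hblt
      have hPeq : P n (s ++ a₂ :: (b ++ a₂ :: d)) = P n (s ++ a₂ :: (y0 ++ d)) := by
        simp only [P_append, P_cons, mul_assoc]
        congr 1
        rw [← mul_assoc, ← mul_assoc, hy0eq, mul_assoc]
      have hlen : (s ++ a₂ :: (y0 ++ d)).length ≤ L := by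
        simp only [List.length_append, List.length_cons] at hL ⊢
        omega
      have hle' : ∀ i ∈ s ++ a₂ :: (y0 ++ d), (i : ℕ) ≤ (a₂ : ℕ) := by
        intro i hi
        simp only [List.mem_append, List.mem_cons] at hi
        rcases hi with h | h | h | h
        · exact hle i (by simp [h])
        · subst h; omega
        · have := hy0le i h; omega
        · exact hle i (by simp [h])
      have htl' : a₂ ∈ s ++ a₂ :: (y0 ++ d) := by simp
      obtain ⟨A, B, hA, hB, hP⟩ := IH (s ++ a₂ :: (y0 ++ d)) hlen a₂ hle' htl'
      exact ⟨A, B, hA, hB, hPeq.trans hP⟩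
    · refine ⟨s, u, hslt, ?_, by simp [mul_assoc]⟩
      intro i hi
      have h1 := hle i (by simp [hi])
      have : (i : ℕ) ≠ (a : ℕ) := fun h => hu (Fin.ext h ▸ hi)
      omega

/-- Words over letters of value `< k` satisfy `w^(k+1) = w^(k+2)`. -/
lemma main : ∀ k : ℕ, ∀ l : List (Fin n), (∀ i ∈ l, (i : ℕ) < k) →
    P n l ^ (k + 1) = P n l ^ (k + 2) := by
  intro k
  induction k using Nat.strong_induction_on with
  | _ k IH =>
  intro l hl
  match k with
  | 0 =>
    have : l = [] := by
      cases l with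
      | nil => rfl
      | cons a _ => exact absurd (hl a List.mem_cons_self) (Nat.not_lt_zero _)
    subst this
    simp
  | (k' + 1) =>
    by_cases hex : ∃ t ∈ l, (t : ℕ) = k'
    · obtain ⟨t, htl, htv⟩ := hex
      have hle : ∀ i ∈ l, (i : ℕ) ≤ (t : ℕ) := fun i hi => by
        have := hl i hi; omega
      obtain ⟨A, B, hA, hB, hPl⟩ := decomp l.length l le_rfl t hle htl
      obtain ⟨y, _, hy2, hy3⟩ := sandwich (t : ℕ) t rfl (B ++ A) (by
        intro i hi
        rcases List.mem_append.mp hi with h | h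
        exacts [hB i h, hA i h])
      rw [P_append] at hy3
      have hq := pow_sandwich' _ _ _ hy3
      have hylt : ∀ i ∈ y, (i : ℕ) < k' - 1 := fun i hi => by
        have := hy2 i hi; omega
      have hstab := pow_stab (IH (k' - 1) (by omega) y hylt)
      have key : ∀ m : ℕ, P n l ^ (m + 1)
          = P n A * (okadaGen n t * (P n y ^ m * P n B)) := by
        intro m
        rw [hPl, pow_decomp]
        congr 1
        rw [← mul_assoc, hq m, mul_assoc]
      have e1 := key (k' + 1)
      have e2 := key (k' + 2)
      have hyy : P n y ^ (k' + 1) = P n y ^ (k' + 2) := by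
        have := hstab (k' + 1) (by omega)
        convert this using 2
      rw [show k' + 1 + 1 = (k' + 1) + 1 from rfl, e1,
        show k' + 1 + 2 = (k' + 2) + 1 by omega, e2, hyy]
    · have hl' : ∀ i ∈ l, (i : ℕ) < k' := by
        intro i hi
        have h1 := hl i hi
        have h2 : ¬ ((i : ℕ) = k') := fun he => hex ⟨i, hi, he⟩
        omega
      have h := IH k' (Nat.lt_succ_self _) l hl'
      calc P n l ^ (k' + 1 + 1) = P n l ^ (k' + 1) * P n l := pow_succ _ _
        _ = P n l ^ (k' + 2) * P n l := by rw [h]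
        _ = P n l ^ (k' + 1 + 2) := (pow_succ _ _).symm

end OkadaAux2

/-- The Okada monoid `O_N` is aperiodic: there is a `K` with `m^K = m^(K+1)` for every
element `m`. -/
theorem okadaMonoid_aperiodic (N : ℕ) :
    ∃ K : ℕ, ∀ m : OkadaMonoid (N - 1), m ^ K = m ^ (K + 1) := by
  refine ⟨(N - 1) + 1, fun m => ?_⟩
  obtain ⟨l, rfl⟩ := OkadaAux.P_surj m
  exact OkadaAux2.main (N - 1) l (fun i _ => i.isLt)
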